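/- Let A ∈ U(2,2) have blocks [[a,b],[c,d]], let q ∈ M₂(ℂ) be skew-Hermitian with cq+d invertible, and set p = (aq+b)(cq+d)⁻¹ and a' = a − pc. Then (a')†(cq+d) = I₂ (so that [[a',0],[c,cq+d]] has the block form of an element of H), and the derivative of the map f_{1,A} : M ↦ (aM+b)(cM+d)⁻¹ at q is the linear map N ↦ a' N (a')† on M₂(ℂ). -/

import Mathlib

open Matrix Complex

noncomputable section

abbrev M2 : Type := Matrix (Fin 2) (Fin 2) ℂ
abbrev M4 : Type := Matrix (Fin 2 ⊕ Fin 2) (Fin 2 ⊕ Fin 2) ℂ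

attribute [local instance] Matrix.normedAddCommGroup Matrix.normedSpace

/-- The Hermitian form of signature (2,2): `g = [[0,I₂],[I₂,0]]`. -/
def gMat : M4 := fromBlocks 0 1 1 0

/-- A copy of `M2` equipped with the `L∞`-operator-norm, making it a normed ring. -/
def FM : Type := Matrix (Fin 2) (Fin 2) ℂ

instance : NormedRing FM := Matrix.linftyOpNormedRing
instance : NormedAlgebra ℂ FM := Matrix.linftyOpNormedAlgebra
instance : FiniteDimensional ℂ FM :=
  inferInstanceAs (FiniteDimensional ℂ (Matrix (Fin 2) (Fin 2) ℂ))
instance : CompleteSpace FM := FiniteDimensional.complete ℂ FM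

lemma aux_deriv (A B C D x S : FM) (h : IsUnit (C * x + D))
    (hS : Ring.inverse (C * x + D) = S) :
    ∃ L : FM →L[ℂ] FM,
      HasFDerivAt (fun N : FM => (A * N + B) * Ring.inverse (C * N + D)) L x ∧
      ∀ N : FM, L N = (A - (A * x + B) * S * C) * N * S := by
  have haff : HasFDerivAt (fun N : FM => A * N + B)
      (ContinuousLinearMap.mul ℂ FM A) x := by
    simpa using ((ContinuousLinearMap.mul ℂ FM A).hasFDerivAt (x := x)).add_const B
  have hlin : HasFDerivAt (fun N : FM => C * N + D)
      (ContinuousLinearMap.mul ℂ FM C) x := by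
    simpa using ((ContinuousLinearMap.mul ℂ FM C).hasFDerivAt (x := x)).add_const D
  have hinv0 := hasFDerivAt_ringInverse (𝕜 := ℂ) h.unit
  rw [h.unit_spec] at hinv0
  have hinv := hinv0.comp x hlin
  have hmul := haff.mul' hinv
  refine ⟨_, hmul, fun N => ?_⟩
  have hu : (↑h.unit⁻¹ : FM) = S := by
    rw [← hS, ← Ring.inverse_unit h.unit, h.unit_spec]
  rw [hu]
  change (A * x + B) * ((-(ContinuousLinearMap.mulLeftRight ℂ FM S S)) (C * N))
    + A * N * (Ring.inverse (C * x + D)) = _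
  rw [hS, ContinuousLinearMap.neg_apply, ContinuousLinearMap.mulLeftRight_apply]
  noncomm_ring

/-- The identity, as a linear equivalence between the two normed structures. -/
def eqvFM : M2 ≃ₗ[ℂ] FM where
  toFun := fun x => x
  invFun := fun x => x
  map_add' := fun _ _ => rfl
  map_smul' := fun _ _ => rfl
  left_inv := fun _ => rfl
  right_inv := fun _ => rfl

def eCLE : M2 ≃L[ℂ] FM := eqvFM.toContinuousLinearEquiv

/-- let `A = [[a,b],[c,d]] ∈ U(2,2)`, `q` skew-Hermitian with `cq+d`
invertible, `p = (aq+b)(cq+d)⁻¹`, `a' = a − pc`. Then `(a')†(cq+d) = I₂`, and the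
derivative of `f_{1,A}` at `q` is the map `N ↦ a' N (a')†`. -/
theorem stmt15 (a b c d : M2)
    (hA : (fromBlocks a b c d : M4)ᴴ * gMat * fromBlocks a b c d = gMat)
    (q : M2) (hq : qᴴ = -q) (h : IsUnit (c * q + d)) :
    (a - (a * q + b) * (c * q + d)⁻¹ * c)ᴴ * (c * q + d) = 1 ∧
    ∃ L : M2 →L[ℂ] M2,
      HasFDerivAt (fun N : M2 => (a * N + b) * (c * N + d)⁻¹) L q ∧
      ∀ N : M2, L N = (a - (a * q + b) * (c * q + d)⁻¹ * c) * N *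
        (a - (a * q + b) * (c * q + d)⁻¹ * c)ᴴ := by
  rw [gMat] at hA
  simp only [Matrix.fromBlocks_conjTranspose, Matrix.fromBlocks_multiply, Matrix.mul_zero,
    Matrix.zero_mul, Matrix.mul_one, Matrix.one_mul, add_zero, zero_add] at hA
  rw [Matrix.fromBlocks_inj] at hA
  obtain ⟨e1, e2, e3, e4⟩ := hA
  have hdet := (Matrix.isUnit_iff_isUnit_det _).mp h
  have hs1 : (c*q+d) * (c*q+d)⁻¹ = 1 := Matrix.mul_nonsing_inv _ hdet
  have hsum : (a*q+b)ᴴ*(c*q+d) + (c*q+d)ᴴ*(a*q+b) = 0 := by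
    have expand : (a*q+b)ᴴ*(c*q+d) + (c*q+d)ᴴ*(a*q+b)
        = (-q) * (cᴴ*a + aᴴ*c) * q + (dᴴ*a + bᴴ*c) * q + (-q) * (cᴴ*b + aᴴ*d)
          + (dᴴ*b + bᴴ*d) := by
      simp only [conjTranspose_add, conjTranspose_mul, hq]
      noncomm_ring
    rw [expand, e1, e2, e3, e4]
    noncomm_ring
  have hneg : (a*q+b)ᴴ*(c*q+d) = -((c*q+d)ᴴ*(a*q+b)) := eq_neg_of_add_eq_zero_left hsum
  have hsH : (c*q+d)⁻¹ᴴ * (c*q+d)ᴴ = 1 := by rw [← conjTranspose_mul, hs1, conjTranspose_one]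
  have part1 : (a - (a * q + b) * (c * q + d)⁻¹ * c)ᴴ * (c * q + d) = 1 := by
    calc (a - (a*q+b)*(c*q+d)⁻¹*c)ᴴ * (c*q+d)
        = aᴴ*(c*q+d) - cᴴ*((c*q+d)⁻¹ᴴ*((a*q+b)ᴴ*(c*q+d))) := by
          simp only [conjTranspose_sub, conjTranspose_mul]; noncomm_ring
      _ = aᴴ*(c*q+d) + cᴴ*(((c*q+d)⁻¹ᴴ*(c*q+d)ᴴ)*(a*q+b)) := by rw [hneg]; noncomm_ring
      _ = (aᴴ*c + cᴴ*a)*q + (aᴴ*d + cᴴ*b) := by rw [hsH]; noncomm_ring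
      _ = 1 := by rw [show aᴴ*c + cᴴ*a = cᴴ*a + aᴴ*c from add_comm _ _, e1,
                      show aᴴ*d + cᴴ*b = cᴴ*b + aᴴ*d from add_comm _ _, e2]; simp
  refine ⟨part1, ?_⟩
  have hinv_eq : (c * q + d)⁻¹ = (a - (a * q + b) * (c * q + d)⁻¹ * c)ᴴ :=
    Matrix.inv_eq_left_inv part1
  have hS : Ring.inverse (c * q + d) = (a - (a * q + b) * (c * q + d)⁻¹ * c)ᴴ := by
    rw [← Matrix.nonsing_inv_eq_ringInverse]; exact hinv_eq
  obtain ⟨L0, hL0, hval⟩ :=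
    aux_deriv a b c d q ((a - (a * q + b) * (c * q + d)⁻¹ * c)ᴴ) h hS
  have h1 := hL0.comp q (eCLE.hasFDerivAt)
  have h2 := ((eCLE.symm : FM →L[ℂ] M2).hasFDerivAt).comp q h1
  refine ⟨(eCLE.symm : FM →L[ℂ] M2).comp (L0.comp (eCLE : M2 →L[ℂ] FM)), ?_, ?_⟩
  · refine h2.congr_of_eventuallyEq (Filter.Eventually.of_forall fun N => ?_)
    show (a * N + b) * (c * N + d)⁻¹ = _
    rw [Matrix.nonsing_inv_eq_ringInverse]
    rfl
  · intro N
    nth_rewrite 1 [hinv_eq]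
    exact hval N
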